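/- Let a, b, c, n be integers with a ≠ 0 and n ≥ 2. If gcd(2·a, n) = 1, then IQF is valid for q(x) ≡ 0 (mod n). -/
import Mathlib


/-- The intermediate form of the quadratic formula (IQF) is valid for
`a·x² + b·x + c ≡ 0 (mod n)`. -/
def IQF (a b c n : ℤ) : Prop :=
  ∀ x : ℤ, n ∣ a * x ^ 2 + b * x + c ↔
    ∃ s : ℤ, n ∣ s ^ 2 - (b ^ 2 - 4 * a * c) ∧ n ∣ 2 * a * x - (-b + s)

/-- The exact form of the quadratic formula: if `gcd(2a, n) = 1` then IQF is valid. -/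
theorem iqf_of_coprime (a b c n : ℤ) (ha : a ≠ 0) (hn : 2 ≤ n)
    (h : Int.gcd (2 * a) n = 1) : IQF a b c n := by
  intro x
  constructor
  · intro hx
    refine ⟨2 * a * x + b, ?_, ?_⟩
    · have : (2 * a * x + b) ^ 2 - (b ^ 2 - 4 * a * c) =
        4 * a * (a * x ^ 2 + b * x + c) := by ring
      rw [this]
      exact Dvd.dvd.mul_left hx _
    · ring_nf
      simp
  · rintro ⟨s, hs, hl⟩
    have hcop : IsCoprime (2 * a) n := Int.isCoprime_iff_gcd_eq_one.mpr h
    have h2 : IsCoprime (2 : ℤ) n := hcop.of_mul_left_left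
    have hcop2 : IsCoprime (4 * a) n := by
      have := h2.mul_left hcop
      rwa [show (2 : ℤ) * (2 * a) = 4 * a by ring] at this
    have key : n ∣ (4 * a) * (a * x ^ 2 + b * x + c) := by
      have h1 : n ∣ (2 * a * x + b - s) * (2 * a * x + b + s) := by
        have : 2 * a * x + b - s = 2 * a * x - (-b + s) := by ring
        rw [this]
        exact hl.mul_right _
      have : (4 * a) * (a * x ^ 2 + b * x + c) =
        (2 * a * x + b - s) * (2 * a * x + b + s) + (s ^ 2 - (b ^ 2 - 4 * a * c)) := by
        ring
      rw [this]
      exact dvd_add h1 hs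
    exact (hcop2.symm.dvd_of_dvd_mul_left key)
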